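/- Let (E, [[·,·]], ρ, φ) be a skew-symmetric algebroid over Q of rank n with a section φ ∈ Γ(E*) satisfying d^E φ = 0 and φ_q ≠ 0 for all q. Let V = ker(φ̂) (the kernel subbundle of the linear function defined by φ), with inclusion i_V : V → E. Define [[σ,γ]]_V by i_V([[σ,γ]]_V) = [[i_V σ, i_V γ]] and ρ_V(σ) = ρ(i_V σ). Then this is well defined: for sections σ, γ of V, the bracket [[i_V σ, i_V γ]] takes values in V, i.e., φ([[i_V σ, i_V γ]]) = 0, and ([[·,·]]_V, ρ_V) is a skew-symmetric algebroid structure on V. -/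
import Mathlib


/-- Let `(E, [[·,·]], ρ)` be a skew-symmetric algebroid (algebraic model)
with a 1-cocycle `φ ∈ Γ(E*)` which is nowhere zero on the fibres (algebraically:
`φ` is surjective).  Then the kernel subbundle `V = ker φ̂` inherits a well-defined
skew-symmetric algebroid structure: the bracket of two sections of `V` again lies in `V`
(i.e. `φ([[i_V σ, i_V γ]]) = 0`), and the induced bracket together with
`ρ_V = ρ ∘ i_V` is skew-symmetric, ℝ-bilinear and satisfies the Leibniz rule. -/
theorem kernel_subalgebroid
    {R : Type*} [CommRing R] [Algebra ℝ R]
    {E : Type*} [AddCommGroup E] [Module ℝ E] [Module R E] [IsScalarTower ℝ R E]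
    (bracket : E → E → E) (anchor : E →ₗ[R] Derivation ℝ R R)
    (hadd_left : ∀ σ₁ σ₂ γ : E, bracket (σ₁ + σ₂) γ = bracket σ₁ γ + bracket σ₂ γ)
    (hsmul_left : ∀ (c : ℝ) (σ γ : E), bracket (c • σ) γ = c • bracket σ γ)
    (hskew : ∀ σ γ : E, bracket σ γ = - bracket γ σ)
    (hleibniz : ∀ (σ γ : E) (f : R),
      bracket σ (f • γ) = f • bracket σ γ + anchor σ f • γ)
    (φ : E →ₗ[R] R)
    (hcocycle : ∀ σ γ : E,
      anchor σ (φ γ) - anchor γ (φ σ) - φ (bracket σ γ) = 0)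
    (hφ : Function.Surjective φ) :
    -- brackets of sections of `V = ker φ̂` lie in `V` ...
    (∀ σ γ : LinearMap.ker φ, φ (bracket (σ : E) (γ : E)) = 0) ∧
    (∃ LbV : LinearMap.ker φ → LinearMap.ker φ → LinearMap.ker φ,
      (∀ σ γ : LinearMap.ker φ, (LbV σ γ : E) = bracket (σ : E) (γ : E)) ∧
      (∀ σ γ, LbV σ γ = - LbV γ σ) ∧
      (∀ σ₁ σ₂ γ, LbV (σ₁ + σ₂) γ = LbV σ₁ γ + LbV σ₂ γ) ∧
      (∀ (c : ℝ) (σ γ), LbV (c • σ) γ = c • LbV σ γ) ∧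
      (∀ (σ γ : LinearMap.ker φ) (f : R),
        LbV σ (f • γ) = f • LbV σ γ + anchor (σ : E) f • γ)) := by
  have hmem : ∀ σ γ : LinearMap.ker φ, φ (bracket (σ : E) (γ : E)) = 0 := by
    intro σ γ
    have h := hcocycle (σ : E) (γ : E)
    rw [σ.2, γ.2] at h
    simpa using h.symm
  refine ⟨hmem, ⟨fun σ γ => ⟨bracket (σ : E) (γ : E), hmem σ γ⟩, fun _ _ => rfl,
    ?_, ?_, ?_, ?_⟩⟩
  · intro σ γ; apply Subtype.ext; simpa using hskew (σ : E) (γ : E)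
  · intro σ₁ σ₂ γ; apply Subtype.ext; simpa using hadd_left (σ₁ : E) (σ₂ : E) (γ : E)
  · intro c σ γ; apply Subtype.ext; simpa using hsmul_left c (σ : E) (γ : E)
  · intro σ γ f; apply Subtype.ext; simpa using hleibniz (σ : E) (γ : E) f
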